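/- arXiv:2101.09682 — 2 statements merged into one kernel-verified Lean document; each statement's English description precedes it below -/
import Mathlib

section
/- Let $V_0 = \sup_{\tau \in \mathcal{T}} \mathbb{E}[g(\tau, X_\tau)]$ be the value of a discrete-time optimal stopping problem on $\{0,1,\ldots,N\}$ with integrable payoffs. Then for every $(\mathcal{F}_n)$-martingale $(M_n)_{n=0}^N$ with $M_0 = 0$ and every sequence $(\varepsilon_n)_{n=0}^N$ of integrable random variables with $\mathbb{E}[\varepsilon_n \mid \mathcal{F}_n] = 0$ for all $n$, one has $V_0 \le \mathbb{E}[\max_{0 \le n \le N} (g(n, X_n) - M_n - \varepsilon_n)]$. -/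
open MeasureTheory Finset

private lemma integrable_sup'_aux {Ω : Type*} {m : MeasurableSpace Ω} {μ : Measure Ω}
    (s : Finset ℕ) (hs : s.Nonempty) (f : ℕ → Ω → ℝ) (hf : ∀ n, Integrable (f n) μ) :
    Integrable (fun ω => s.sup' hs (fun n => f n ω)) μ := by
  induction hs using Finset.Nonempty.cons_induction with
  | singleton a => simpa using hf a
  | cons a s ha hs ih =>
      have : (fun ω => (Finset.cons a s ha).sup' (Finset.cons_nonempty ha) (fun n => f n ω))
          = fun ω => f a ω ⊔ s.sup' hs (fun n => f n ω) := by
        funext ω; rw [Finset.sup'_cons]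
      rw [this]
      exact (hf a).sup ih

private lemma stoppedValue_eq_sum {Ω : Type*} {m : MeasurableSpace Ω}
    (𝒢 : Filtration ℕ m) (N : ℕ) (τ : Ω → ℕ) (hτN : ∀ ω, τ ω ≤ N) (f : ℕ → Ω → ℝ) :
    (fun ω => f (τ ω) ω) =
      fun ω => ∑ n ∈ Finset.range (N + 1), Set.indicator {x | τ x = n} (f n) ω := by
  funext ω
  rw [Finset.sum_eq_single (τ ω)]
  · simp [Set.indicator_of_mem, Set.mem_setOf_eq]
  · intro b _ hb
    exact Set.indicator_of_notMem (fun h => hb (by simpa using h.symm)) _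
  · intro h
    exact absurd (Finset.mem_range.mpr (Nat.lt_succ_of_le (hτN ω))) h

private lemma integral_stoppedValue_sum {Ω : Type*} {m : MeasurableSpace Ω} {μ : Measure Ω}
    (𝒢 : Filtration ℕ m) (N : ℕ) (τ : Ω → ℕ) (hτ : IsStoppingTime 𝒢 (fun ω => (τ ω : WithTop ℕ)))
    (hτN : ∀ ω, τ ω ≤ N) (f : ℕ → Ω → ℝ) (hf : ∀ n, Integrable (f n) μ) :
    ∫ ω, f (τ ω) ω ∂μ =
      ∑ n ∈ Finset.range (N + 1), ∫ ω in {x | τ x = n}, f n ω ∂μ := by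
  have hmeas : ∀ n, MeasurableSet {x | τ x = n} := fun n => 𝒢.le n _ (by simpa using hτ.measurableSet_eq n)
  rw [stoppedValue_eq_sum 𝒢 N τ hτN f]
  rw [integral_finset_sum _ (fun n _ => (hf n).indicator (hmeas n))]
  exact Finset.sum_congr rfl fun n _ => integral_indicator (hmeas n)

private lemma integrable_stoppedValue_nat {Ω : Type*} {m : MeasurableSpace Ω} {μ : Measure Ω}
    (𝒢 : Filtration ℕ m) (N : ℕ) (τ : Ω → ℕ) (hτ : IsStoppingTime 𝒢 (fun ω => (τ ω : WithTop ℕ)))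
    {f : ℕ → Ω → ℝ} (hf : ∀ n, Integrable (f n) μ) (hτN : ∀ ω, τ ω ≤ N) :
    Integrable (fun ω => f (τ ω) ω) μ := by
  have := integrable_stoppedValue ℕ hτ hf (N := N) (fun ω => WithTop.coe_le_coe.mpr (hτN ω))
  exact this

/-- Dual (pathwise) upper bound for optimal stopping: for every martingale `M` with
`M 0 = 0` and every integrable sequence `ε` with `E[ε n | F_n] = 0`,
`V_0 ≤ E[max_{0 ≤ n ≤ N} (g(n,X_n) - M_n - ε_n)]`. -/
theorem dual_upper_bound
    {Ω : Type*} {m : MeasurableSpace Ω} {μ : Measure Ω} [IsProbabilityMeasure μ]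
    (𝒢 : Filtration ℕ m) (N : ℕ)
    (G : ℕ → Ω → ℝ) (hGint : ∀ n, Integrable (G n) μ) (hGadapted : Adapted 𝒢 G)
    (M : ℕ → Ω → ℝ) (hMint : ∀ n, Integrable (M n) μ) (hMadapted : Adapted 𝒢 M)
    (hM0 : ∀ ω, M 0 ω = 0)
    (hMmart : ∀ n, μ[M (n + 1) | 𝒢 n] =ᵐ[μ] M n)
    (ε : ℕ → Ω → ℝ) (hεint : ∀ n, Integrable (ε n) μ)
    (hεcond : ∀ n, μ[ε n | 𝒢 n] =ᵐ[μ] 0) :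
    (⨆ τ : {τ : Ω → ℕ // IsStoppingTime 𝒢 (fun ω => (τ ω : WithTop ℕ)) ∧ ∀ ω, τ ω ≤ N},
        ∫ ω, G (τ.1 ω) ω ∂μ) ≤
      ∫ ω, (Finset.range (N + 1)).sup' ⟨0, by simp⟩
        (fun n => G n ω - M n ω - ε n ω) ∂μ := by
  have hm : Martingale M 𝒢 μ :=
    martingale_nat hMadapted.stronglyAdapted hMint fun i => (hMmart i).symm
  haveI : Nonempty {τ : Ω → ℕ // IsStoppingTime 𝒢 (fun ω => (τ ω : WithTop ℕ)) ∧ ∀ ω, τ ω ≤ N} :=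
    ⟨⟨fun _ => 0, isStoppingTime_const 𝒢 0, fun _ => Nat.zero_le N⟩⟩
  apply ciSup_le
  rintro ⟨τ, hτ, hτN⟩
  dsimp only
  set F : ℕ → Ω → ℝ := fun n ω => G n ω - M n ω - ε n ω with hF
  have hFint : ∀ n, Integrable (F n) μ := fun n =>
    ((hGint n).sub (hMint n)).sub (hεint n)
  have hmeas : ∀ n, MeasurableSet {x | τ x = n} := fun n => 𝒢.le n _ (by simpa using hτ.measurableSet_eq n)
  -- ∫ ε(τ) = 0
  have hε0 : ∫ ω, ε (τ ω) ω ∂μ = 0 := by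
    rw [integral_stoppedValue_sum 𝒢 N τ hτ hτN ε hεint]
    refine Finset.sum_eq_zero fun n _ => ?_
    have h1 : ∫ ω in {x | τ x = n}, ε n ω ∂μ
        = ∫ ω in {x | τ x = n}, (μ[ε n | 𝒢 n]) ω ∂μ :=
      (setIntegral_condExp (𝒢.le n) (hεint n) (by simpa using hτ.measurableSet_eq n)).symm
    rw [h1, setIntegral_congr_ae (hmeas n) ((hεcond n).mono fun ω h _ => h)]
    simp
  -- ∫ M(τ) = 0
  have hM0' : ∫ ω, M (τ ω) ω ∂μ = 0 := by
    rw [integral_stoppedValue_sum 𝒢 N τ hτ hτN M hMint]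
    have hstep : ∀ n ∈ Finset.range (N + 1),
        ∫ ω in {x | τ x = n}, M n ω ∂μ = ∫ ω in {x | τ x = n}, M N ω ∂μ := by
      intro n hn
      exact hm.setIntegral_eq (Nat.lt_succ_iff.mp (Finset.mem_range.mp hn))
        (by simpa using hτ.measurableSet_eq n)
    rw [Finset.sum_congr rfl hstep]
    have hsum : ∑ n ∈ Finset.range (N + 1), ∫ ω in {x | τ x = n}, M N ω ∂μ
        = ∫ ω, M N ω ∂μ := by
      rw [← integral_stoppedValue_sum 𝒢 N τ hτ hτN (fun _ => M N) (fun _ => hMint N)]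
    rw [hsum]
    have : ∫ ω, M N ω ∂μ = ∫ ω, M 0 ω ∂μ := by
      have := hm.setIntegral_eq (Nat.zero_le N) (s := Set.univ) MeasurableSet.univ
      simpa using this.symm
    rw [this]
    simp [hM0]
  -- decompose G(τ) = F(τ) + M(τ) + ε(τ)
  have hGdecomp : ∫ ω, G (τ ω) ω ∂μ
      = ∫ ω, F (τ ω) ω ∂μ + ∫ ω, M (τ ω) ω ∂μ + ∫ ω, ε (τ ω) ω ∂μ := by
    have hFi : Integrable (fun ω => F (τ ω) ω) μ :=
      integrable_stoppedValue_nat 𝒢 N τ hτ hFint hτN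
    have hMi : Integrable (fun ω => M (τ ω) ω) μ :=
      integrable_stoppedValue_nat 𝒢 N τ hτ hMint hτN
    have hεi : Integrable (fun ω => ε (τ ω) ω) μ :=
      integrable_stoppedValue_nat 𝒢 N τ hτ hεint hτN
    have heq : (fun ω => G (τ ω) ω)
        = fun ω => F (τ ω) ω + (M (τ ω) ω + ε (τ ω) ω) := by
      funext ω; simp [hF]
    have hMεi : Integrable (fun ω => M (τ ω) ω + ε (τ ω) ω) μ := hMi.add hεi
    rw [heq, integral_add hFi hMεi, integral_add hMi hεi, ← add_assoc]
  rw [hGdecomp, hε0, hM0', add_zero, add_zero]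
  refine integral_mono (integrable_stoppedValue_nat 𝒢 N τ hτ hFint hτN)
    (integrable_sup'_aux _ _ F hFint) fun ω => ?_
  exact Finset.le_sup' (fun n => F n ω)
    (Finset.mem_range.mpr (Nat.lt_succ_of_le (hτN ω)))
end

section
/- In the dual upper bound $V_0 \le \mathbb{E}[\max_{0 \le n \le N}(g(n,X_n) - M_n - \varepsilon_n)]$, equality holds when $M = M^Z$ is the martingale part of the Doob decomposition of the Snell envelope $Z$ and $\varepsilon \equiv 0$; i.e. $V_0 = \mathbb{E}[\max_{0 \le n \le N}(g(n,X_n) - M_n^Z)]$. -/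
open MeasureTheory Finset

section Aux

variable {Ω : Type*} {m : MeasurableSpace Ω} (μ : Measure Ω)
  (𝒢 : Filtration ℕ m) (N : ℕ) (Z : ℕ → Ω → ℝ)

/-- The process stopped at `N`. -/
noncomputable def Zb : ℕ → Ω → ℝ := fun n ω => Z (min n N) ω

/-- The Doob martingale part of `Z`, built from conditional expectations, frozen after `N`. -/
noncomputable def Mp : ℕ → Ω → ℝ :=
  fun n ω => ∑ k ∈ Finset.range (min n N), (Z (k + 1) ω - (μ[Z (k + 1) | 𝒢 k]) ω)

lemma Mp_zero (ω : Ω) : Mp μ 𝒢 N Z 0 ω = 0 := by simp [Mp]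

lemma Mp_succ {k : ℕ} (hk : k < N) (ω : Ω) :
    Mp μ 𝒢 N Z (k + 1) ω = Mp μ 𝒢 N Z k ω + (Z (k + 1) ω - (μ[Z (k + 1) | 𝒢 k]) ω) := by
  have h1 : min (k + 1) N = k + 1 := by omega
  have h2 : min k N = k := by omega
  simp only [Mp, h1, h2, Finset.sum_range_succ]

lemma Mp_const {n : ℕ} (hn : N ≤ n) (ω : Ω) : Mp μ 𝒢 N Z n ω = Mp μ 𝒢 N Z N ω := by
  have h1 : min n N = N := by omega
  simp [Mp, h1]

lemma Mp_adapted (hZadapted : Adapted 𝒢 Z) : StronglyAdapted 𝒢 (Mp μ 𝒢 N Z) := by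
  intro n
  apply Finset.stronglyMeasurable_fun_sum
  intro k hk
  have hk1 : k + 1 ≤ n := le_trans (Finset.mem_range.mp hk) (min_le_left _ _)
  exact ((hZadapted (k + 1)).stronglyMeasurable.mono (𝒢.mono hk1)).sub
    (stronglyMeasurable_condExp.mono ((𝒢.mono (by omega)) : 𝒢 k ≤ 𝒢 n))

lemma Mp_integrable (hZint : ∀ n, Integrable (Z n) μ) (n : ℕ) :
    Integrable (Mp μ 𝒢 N Z n) μ := by
  show Integrable
    (fun ω => ∑ k ∈ Finset.range (min n N), (Z (k + 1) ω - (μ[Z (k + 1) | 𝒢 k]) ω)) μ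
  exact integrable_finset_sum _ fun k _ => (hZint (k + 1)).sub integrable_condExp

lemma Mp_martingale [IsProbabilityMeasure μ] (hZadapted : Adapted 𝒢 Z)
    (hZint : ∀ n, Integrable (Z n) μ) : Martingale (Mp μ 𝒢 N Z) 𝒢 μ := by
  refine martingale_nat (Mp_adapted μ 𝒢 N Z hZadapted) (Mp_integrable μ 𝒢 N Z hZint) fun n => ?_
  have hMpn_meas : StronglyMeasurable[𝒢 n] (Mp μ 𝒢 N Z n) := Mp_adapted μ 𝒢 N Z hZadapted n
  by_cases hn : n < N
  · have hsucc : Mp μ 𝒢 N Z (n + 1) =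
        (Mp μ 𝒢 N Z n) + (fun ω => Z (n + 1) ω - (μ[Z (n + 1) | 𝒢 n]) ω) := by
      funext ω; simp [Mp_succ μ 𝒢 N Z hn ω]
    rw [hsucc]
    have e1 := condExp_add (μ := μ) (m := 𝒢 n) (f := Mp μ 𝒢 N Z n)
      (g := fun ω => Z (n + 1) ω - (μ[Z (n + 1) | 𝒢 n]) ω)
      (Mp_integrable μ 𝒢 N Z hZint n) ((hZint (n + 1)).sub integrable_condExp)
    have e2 := condExp_sub (μ := μ) (m := 𝒢 n) (f := Z (n + 1)) (g := μ[Z (n + 1) | 𝒢 n])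
      (hZint (n + 1)) integrable_condExp
    have e3 : μ[Mp μ 𝒢 N Z n | 𝒢 n] = Mp μ 𝒢 N Z n :=
      condExp_of_stronglyMeasurable (𝒢.le n) hMpn_meas (Mp_integrable μ 𝒢 N Z hZint n)
    have e4 : μ[(μ[Z (n + 1) | 𝒢 n]) | 𝒢 n] = μ[Z (n + 1) | 𝒢 n] :=
      condExp_of_stronglyMeasurable (𝒢.le n) stronglyMeasurable_condExp integrable_condExp
    have e2' : μ[fun ω => Z (n + 1) ω - (μ[Z (n + 1) | 𝒢 n]) ω | 𝒢 n]
        =ᵐ[μ] μ[Z (n + 1) | 𝒢 n] - μ[(μ[Z (n + 1) | 𝒢 n]) | 𝒢 n] := e2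
    filter_upwards [e1, e2'] with ω h1 h2
    simp only [Pi.add_apply, Pi.sub_apply] at h1 h2 ⊢
    rw [h1, h2, e3, e4]
    simp
  · have hsucc : Mp μ 𝒢 N Z (n + 1) = Mp μ 𝒢 N Z n := by
      funext ω
      rw [Mp_const μ 𝒢 N Z (show N ≤ n + 1 by omega) ω,
        Mp_const μ 𝒢 N Z (le_of_not_gt hn) ω]
    rw [hsucc,
      condExp_of_stronglyMeasurable (𝒢.le n) hMpn_meas (Mp_integrable μ 𝒢 N Z hZint n)]

end Aux

/-- Tightness of the dual upper bound: with the Doob martingale `M^Z` of the Snell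
envelope and `ε ≡ 0`, equality holds:
`V_0 = E[max_{0 ≤ n ≤ N} (g(n,X_n) - M^Z_n)]`. -/
theorem dual_upper_bound_tight
    {Ω : Type*} {m : MeasurableSpace Ω} {μ : Measure Ω} [IsProbabilityMeasure μ]
    (𝒢 : Filtration ℕ m) (N : ℕ)
    (G : ℕ → Ω → ℝ) (hGint : ∀ n, Integrable (G n) μ) (hGadapted : Adapted 𝒢 G)
    (Z : ℕ → Ω → ℝ) (hZint : ∀ n, Integrable (Z n) μ) (hZadapted : Adapted 𝒢 Z)
    (hZN : ∀ ω, Z N ω = G N ω)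
    (hZrec : ∀ n < N, Z n =ᵐ[μ] fun ω => max (G n ω) ((μ[Z (n + 1) | 𝒢 n]) ω))
    (M : ℕ → Ω → ℝ) (hMint : ∀ n, Integrable (M n) μ)
    (hM0 : ∀ ω, M 0 ω = 0)
    (hMinc : ∀ n, 1 ≤ n → n ≤ N →
      (fun ω => M n ω - M (n - 1) ω) =ᵐ[μ] fun ω => Z n ω - (μ[Z n | 𝒢 (n - 1)]) ω) :
    (⨆ τ : {τ : Ω → ℕ // IsStoppingTime 𝒢 (fun ω => (τ ω : WithTop ℕ)) ∧ ∀ ω, τ ω ≤ N},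
        ∫ ω, G (τ.1 ω) ω ∂μ) =
      ∫ ω, (Finset.range (N + 1)).sup' ⟨0, by simp⟩ (fun n => G n ω - M n ω) ∂μ := by
  classical
  haveI : Nonempty {τ : Ω → ℕ // IsStoppingTime 𝒢 (fun ω => (τ ω : WithTop ℕ)) ∧ ∀ ω, τ ω ≤ N} :=
    ⟨⟨fun _ => 0, isStoppingTime_const 𝒢 0, fun ω => Nat.zero_le N⟩⟩
  -- the stopping time τ* : first time Z ≤ G
  have hex : ∀ ω, ∃ n, Z n ω ≤ G n ω := fun ω => ⟨N, (hZN ω).le⟩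
  set τs : Ω → ℕ := fun ω => Nat.find (hex ω) with hτs_def
  have hτsN : ∀ ω, τs ω ≤ N := fun ω => Nat.find_le (hZN ω).le
  have hτs_spec : ∀ ω, Z (τs ω) ω ≤ G (τs ω) ω := fun ω => Nat.find_spec (hex ω)
  have hτs_min : ∀ ω, ∀ k, k < τs ω → G k ω < Z k ω := fun ω k hk =>
    lt_of_not_ge (Nat.find_min (hex ω) hk)
  have hτs_stop : IsStoppingTime 𝒢 (fun ω => (τs ω : WithTop ℕ)) := by
    intro n
    have hset : {ω | τs ω ≤ n} = ⋃ k ∈ Finset.range (n + 1), {ω | Z k ω ≤ G k ω} := by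
      ext ω
      simp only [Set.mem_setOf_eq, Set.mem_iUnion, Finset.mem_range, Nat.lt_succ_iff,
        hτs_def, Nat.find_le_iff]
      exact ⟨fun ⟨m, hm, hp⟩ => ⟨m, hm, hp⟩, fun ⟨m, hm, hp⟩ => ⟨m, hm, hp⟩⟩
    have hset' : {ω | (τs ω : WithTop ℕ) ≤ (n : WithTop ℕ)} = {ω | τs ω ≤ n} := by
      ext ω; simp
    show MeasurableSet[𝒢 n] {ω | (τs ω : WithTop ℕ) ≤ (n : WithTop ℕ)}
    rw [hset', hset]
    refine MeasurableSet.biUnion (Finset.range (n + 1)).countable_toSet fun k hk => ?_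
    have hk' : k ≤ n := by
      have := Finset.mem_range.mp (Finset.mem_coe.mp hk)
      omega
    exact 𝒢.mono hk' _ (measurableSet_le (hZadapted k) (hGadapted k))
  -- a.e. pointwise versions of the hypotheses
  have hae1 : ∀ᵐ ω ∂μ, ∀ n, n < N → Z n ω = max (G n ω) ((μ[Z (n + 1) | 𝒢 n]) ω) := by
    rw [ae_all_iff]
    intro n
    by_cases h : n < N
    · filter_upwards [hZrec n h] with ω hω _
      exact hω
    · filter_upwards with ω hn
      exact absurd hn h
  have hae2 : ∀ᵐ ω ∂μ, ∀ k, k < N →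
      M (k + 1) ω - M k ω = Z (k + 1) ω - (μ[Z (k + 1) | 𝒢 k]) ω := by
    rw [ae_all_iff]
    intro k
    by_cases h : k < N
    · have h' := hMinc (k + 1) (by omega) (by omega)
      simp only [Nat.add_sub_cancel] at h'
      filter_upwards [h'] with ω hω _
      exact hω
    · filter_upwards with ω hk
      exact absurd hk h
  have haeGZ : ∀ᵐ ω ∂μ, ∀ n, n ≤ N → G n ω ≤ Z n ω := by
    filter_upwards [hae1] with ω h1
    intro n hn
    rcases lt_or_eq_of_le hn with h | h
    · rw [h1 n h]; exact le_max_left _ _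
    · subst h; exact (hZN ω).ge
  have haeflat : ∀ᵐ ω ∂μ, ∀ k, k < τs ω → Z k ω = (μ[Z (k + 1) | 𝒢 k]) ω := by
    filter_upwards [hae1] with ω h1
    intro k hk
    have hkN : k < N := lt_of_lt_of_le hk (hτsN ω)
    have hlt := hτs_min ω k hk
    have hmax := h1 k hkN
    rcases le_total (G k ω) ((μ[Z (k + 1) | 𝒢 k]) ω) with hc | hc
    · rw [hmax, max_eq_right hc]
    · exfalso
      rw [hmax, max_eq_left hc] at hlt
      exact lt_irrefl _ hlt
  -- pointwise telescoping for Mp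
  have tel : ∀ ω (j : ℕ), j ≤ N → (∀ k, k < j → Z k ω = (μ[Z (k + 1) | 𝒢 k]) ω) →
      Mp μ 𝒢 N Z j ω = Z j ω - Z 0 ω := by
    intro ω j hj hflat
    induction j with
    | zero => simp [Mp_zero]
    | succ k ih =>
      rw [Mp_succ μ 𝒢 N Z (by omega) ω, ih (by omega) (fun i hi => hflat i (by omega)),
        ← hflat k (by omega)]
      ring
  -- pointwise upper bound Z n - Mp n ≤ Z 0
  have upper : ∀ ω, (∀ k, k < N → (μ[Z (k + 1) | 𝒢 k]) ω ≤ Z k ω) →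
      ∀ n, n ≤ N → Z n ω - Mp μ 𝒢 N Z n ω ≤ Z 0 ω := by
    intro ω hc n
    induction n with
    | zero => intro _; simp [Mp_zero]
    | succ k ih =>
      intro hn
      have hk : k < N := by omega
      have h1 := ih (by omega)
      have h2 := hc k hk
      rw [Mp_succ μ 𝒢 N Z hk ω]
      linarith
  -- the RHS integral equals ∫ Z 0
  have hRHS : ∫ ω, (Finset.range (N + 1)).sup' ⟨0, by simp⟩ (fun n => G n ω - M n ω) ∂μ
      = ∫ ω, Z 0 ω ∂μ := by
    refine integral_congr_ae ?_
    filter_upwards [hae1, hae2, haeGZ, haeflat] with ω h1 h2 hGZ hflat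
    have hCZ : ∀ k, k < N → (μ[Z (k + 1) | 𝒢 k]) ω ≤ Z k ω := by
      intro k hk
      rw [h1 k hk]
      exact le_max_right _ _
    have hMM : ∀ n, n ≤ N → M n ω = Mp μ 𝒢 N Z n ω := by
      intro n
      induction n with
      | zero => intro _; rw [hM0, Mp_zero]
      | succ k ih =>
        intro hn
        rw [Mp_succ μ 𝒢 N Z (by omega) ω, ← ih (by omega), ← h2 k (by omega)]
        ring
    apply le_antisymm
    · refine Finset.sup'_le _ _ fun n hn => ?_
      have hn' : n ≤ N := by
        have : n < N + 1 := by simpa using hn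
        omega
      have h3 := upper ω hCZ n hn'
      have h4 := hGZ n hn'
      rw [hMM n hn']
      linarith
    · have hjmem : τs ω ∈ Finset.range (N + 1) := by
        simp [Nat.lt_succ_iff, hτsN ω]
      refine le_trans ?_ (Finset.le_sup' _ hjmem)
      have hGj : G (τs ω) ω = Z (τs ω) ω := le_antisymm (hGZ _ (hτsN ω)) (hτs_spec ω)
      rw [hMM _ (hτsN ω), tel ω (τs ω) (hτsN ω) hflat, hGj]
      linarith [le_refl (Z 0 ω)]
  -- the stopped process is a supermartingale
  have hZbsuper : Supermartingale (Zb N Z) 𝒢 μ := by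
    refine supermartingale_nat (fun n => (hZadapted _).stronglyMeasurable.mono (𝒢.mono (min_le_left n N)))
      (fun n => hZint _) fun n => ?_
    by_cases hn : n < N
    · have e1 : Zb N Z (n + 1) = Z (n + 1) := by
        funext ω; simp only [Zb]; rw [min_eq_left (by omega)]
      have e2 : Zb N Z n = Z n := by
        funext ω; simp only [Zb]; rw [min_eq_left (by omega)]
      rw [e1, e2]
      filter_upwards [hZrec n hn] with ω hω
      rw [hω]
      exact le_max_right _ _
    · have e1 : Zb N Z (n + 1) = Z N := by
        funext ω; simp only [Zb]; rw [min_eq_right (by omega)]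
      have e2 : Zb N Z n = Z N := by
        funext ω; simp only [Zb]; rw [min_eq_right (by omega)]
      rw [e1, e2, condExp_of_stronglyMeasurable (𝒢.le n)
        ((hZadapted N).stronglyMeasurable.mono (𝒢.mono (le_of_not_gt hn))) (hZint N)]
  -- upper bound for any stopping time
  have key_le : ∀ (τ : Ω → ℕ), IsStoppingTime 𝒢 (fun ω => (τ ω : WithTop ℕ)) → (∀ ω, τ ω ≤ N) →
      ∫ ω, G (τ ω) ω ∂μ ≤ ∫ ω, Z 0 ω ∂μ := by
    intro τ hτ hb
    have hint1 : Integrable (stoppedValue G (fun ω => (τ ω : WithTop ℕ))) μ := integrable_stoppedValue ℕ hτ hGint (fun ω => WithTop.coe_le_coe.mpr (hb ω))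
    have hint2 : Integrable (stoppedValue (Zb N Z) (fun ω => (τ ω : WithTop ℕ))) μ :=
      integrable_stoppedValue ℕ hτ (fun n => hZint _) (fun ω => WithTop.coe_le_coe.mpr (hb ω))
    have step1 : ∫ ω, G (τ ω) ω ∂μ ≤ (∫ ω, stoppedValue (Zb N Z) (fun ω => (τ ω : WithTop ℕ)) ω ∂μ) := by
      refine integral_mono_ae hint1 hint2 ?_
      filter_upwards [haeGZ] with ω hGZ
      show G (τ ω) ω ≤ Zb N Z (τ ω) ω
      simp only [Zb]
      rw [min_eq_left (hb ω)]
      exact hGZ _ (hb ω)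
    have step2 : (∫ ω, stoppedValue (Zb N Z) (fun ω => (τ ω : WithTop ℕ)) ω ∂μ) ≤ (∫ ω, stoppedValue (Zb N Z) (fun _ => WithTop.some (0 : ℕ)) ω ∂μ) := by
      have hneg := hZbsuper.neg.expected_stoppedValue_mono (isStoppingTime_const 𝒢 0) hτ
        (fun ω => WithTop.coe_le_coe.mpr (Nat.zero_le _)) (fun ω => WithTop.coe_le_coe.mpr (hb ω))
      have e : ∀ σ : Ω → WithTop ℕ, stoppedValue (-(Zb N Z)) σ = -(stoppedValue (Zb N Z) σ) :=
        fun σ => rfl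
      simp only [e, Pi.neg_apply, integral_neg] at hneg
      linarith
    have step3 : (∫ ω, stoppedValue (Zb N Z) (fun _ => WithTop.some (0 : ℕ)) ω ∂μ) = ∫ ω, Z 0 ω ∂μ := by
      refine integral_congr_ae (Filter.Eventually.of_forall fun ω => ?_)
      show Zb N Z 0 ω = Z 0 ω
      simp [Zb]
    calc ∫ ω, G (τ ω) ω ∂μ ≤ (∫ ω, stoppedValue (Zb N Z) (fun ω => (τ ω : WithTop ℕ)) ω ∂μ) := step1
      _ ≤ (∫ ω, stoppedValue (Zb N Z) (fun _ => WithTop.some (0 : ℕ)) ω ∂μ) := step2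
      _ = ∫ ω, Z 0 ω ∂μ := step3
  -- the stopped value of the Doob martingale has zero mean
  have hMpmart := Mp_martingale μ 𝒢 N Z hZadapted hZint
  have hMp0 : (∫ ω, stoppedValue (Mp μ 𝒢 N Z) (fun ω => (τs ω : WithTop ℕ)) ω ∂μ) = 0 := by
    have h0 : (∫ ω, stoppedValue (Mp μ 𝒢 N Z) (fun _ => WithTop.some (0 : ℕ)) ω ∂μ) = 0 := by
      have e : stoppedValue (Mp μ 𝒢 N Z) (fun _ => WithTop.some (0 : ℕ)) = fun _ => (0 : ℝ) :=
        funext fun ω => Mp_zero μ 𝒢 N Z ω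
      rw [e, integral_zero]
    have h1 := hMpmart.submartingale.expected_stoppedValue_mono (isStoppingTime_const 𝒢 0)
      hτs_stop (fun ω => WithTop.coe_le_coe.mpr (Nat.zero_le _))
        (fun ω => WithTop.coe_le_coe.mpr (hτsN ω))
    have h2 := hMpmart.neg.submartingale.expected_stoppedValue_mono (isStoppingTime_const 𝒢 0)
      hτs_stop (fun ω => WithTop.coe_le_coe.mpr (Nat.zero_le _))
        (fun ω => WithTop.coe_le_coe.mpr (hτsN ω))
    have e : ∀ σ : Ω → WithTop ℕ, stoppedValue (-(Mp μ 𝒢 N Z)) σ = -(stoppedValue (Mp μ 𝒢 N Z) σ) :=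
      fun σ => rfl
    simp only [e, Pi.neg_apply, integral_neg] at h2
    rw [h0] at h1 h2
    linarith
  -- the optimal stopping time achieves ∫ Z 0
  have key_eq : ∫ ω, G (τs ω) ω ∂μ = ∫ ω, Z 0 ω ∂μ := by
    have hcongr : (fun ω => G (τs ω) ω)
        =ᵐ[μ] fun ω => Z 0 ω + stoppedValue (Mp μ 𝒢 N Z) (fun ω => (τs ω : WithTop ℕ)) ω := by
      filter_upwards [haeGZ, haeflat] with ω hGZ hflat
      have hGj : G (τs ω) ω = Z (τs ω) ω := le_antisymm (hGZ _ (hτsN ω)) (hτs_spec ω)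
      show G (τs ω) ω = Z 0 ω + Mp μ 𝒢 N Z (τs ω) ω
      rw [tel ω (τs ω) (hτsN ω) hflat, hGj]
      ring
    calc ∫ ω, G (τs ω) ω ∂μ
        = ∫ ω, (Z 0 ω + stoppedValue (Mp μ 𝒢 N Z) (fun ω => (τs ω : WithTop ℕ)) ω) ∂μ := integral_congr_ae hcongr
      _ = ∫ ω, Z 0 ω ∂μ + ∫ ω, stoppedValue (Mp μ 𝒢 N Z) (fun ω => (τs ω : WithTop ℕ)) ω ∂μ :=
          integral_add (hZint 0)
            (integrable_stoppedValue ℕ hτs_stop (Mp_integrable μ 𝒢 N Z hZint)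
              (fun ω => WithTop.coe_le_coe.mpr (hτsN ω)))
      _ = ∫ ω, Z 0 ω ∂μ := by rw [show (∫ ω, stoppedValue (Mp μ 𝒢 N Z) (fun ω => (τs ω : WithTop ℕ)) ω ∂μ) = 0 from hMp0,
            add_zero]
  -- conclude
  rw [hRHS]
  apply le_antisymm
  · exact ciSup_le fun τ => key_le τ.1 τ.2.1 τ.2.2
  · have hbdd : BddAbove (Set.range fun τ : {τ : Ω → ℕ // IsStoppingTime 𝒢 (fun ω => (τ ω : WithTop ℕ)) ∧ ∀ ω, τ ω ≤ N} =>
        ∫ ω, G (τ.1 ω) ω ∂μ) := by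
      refine ⟨∫ ω, Z 0 ω ∂μ, ?_⟩
      rintro x ⟨τ, rfl⟩
      exact key_le τ.1 τ.2.1 τ.2.2
    exact key_eq.symm.le.trans (le_ciSup hbdd ⟨τs, hτs_stop, hτsN⟩)
end
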